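/- Let U = (H ⊗ I₂) · CNOT be the Bell-measurement unitary acting on ℂ^(Fin 2 × Fin 2). For every a ∈ {0,1}: |⟨00|U|a,a⟩|² = 1/2 and |⟨11|U|1−a, a⟩|² = 1/2. That is, in a measure-and-replay attack—where Alice prepared |Φ⁺⟩ (so after Eve's Z-basis measurement with result a the pair Alice measures is |a,a⟩) or prepared |Ψ⁻⟩ (so the pair she measures is |1−a, a⟩)—the Bell measurement returns the outcome matching the Bell state Alice originally produced (00 for |Φ⁺⟩, 11 for |Ψ⁻⟩) with probability exactly 1/2. Hence, given that Eve attacks the probing bit, MRAD fails to detect the attack with probability 1/2 and detects it with probability 1/2. -/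

import Mathlib

open Matrix Kronecker

/-- The 2×2 Hadamard matrix `(1/√2)·[[1,1],[1,−1]]` over ℂ. -/
noncomputable def Had : Matrix (Fin 2) (Fin 2) ℂ :=
  (1 / Real.sqrt 2 : ℝ) • !![1, 1; 1, -1]

/-- The CNOT matrix with the first qubit as control: `CNOT|a,b⟩ = |a, a⊕b⟩`. -/
def CNOT : Matrix (Fin 2 × Fin 2) (Fin 2 × Fin 2) ℂ :=
  fun i j => if i = (j.1, j.1 + j.2) then 1 else 0

/-- The Bell-measurement unitary `U = (H ⊗ I₂)·CNOT`. -/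
noncomputable def BellU : Matrix (Fin 2 × Fin 2) (Fin 2 × Fin 2) ℂ :=
  (Had ⊗ₖ (1 : Matrix (Fin 2) (Fin 2) ℂ)) * CNOT

/-- Computational basis vector `|ab⟩` of `ℂ^(Fin 2 × Fin 2)`. -/
def ket (a b : Fin 2) : Fin 2 × Fin 2 → ℂ :=
  fun p => if p = (a, b) then 1 else 0

lemma absInv : ‖(((Real.sqrt 2)⁻¹ : ℝ) : ℂ)‖ ^ 2 = 1 / 2 := by
  rw [Complex.norm_real, Real.norm_eq_abs, abs_of_nonneg (by positivity)]
  rw [inv_pow, ← Real.sq_sqrt (by norm_num : (2:ℝ) ≥ 0)]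
  norm_num

/-- Measure-and-replay attack detection probability: for every `a ∈ {0,1}`,
`|⟨00|U|a,a⟩|² = 1/2` and `|⟨11|U|1−a,a⟩|² = 1/2`. Hence if Alice prepared `|Φ⁺⟩`
(expected outcome 00) or `|Ψ⁻⟩` (expected outcome 11) and Eve measured the probing
bit with result `a`, the Bell measurement returns the outcome matching Alice's
original Bell state with probability exactly 1/2, so MRAD detects the attack with
probability 1/2. -/
theorem mrad_detection_probability_half :
    ∀ a : Fin 2,
      ‖BellU.mulVec (ket a a) ((0 : Fin 2), (0 : Fin 2))‖ ^ 2 = 1 / 2 ∧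
      ‖BellU.mulVec (ket (1 - a) a) ((1 : Fin 2), (1 : Fin 2))‖ ^ 2 = 1 / 2 := by
  intro a
  fin_cases a <;>
  constructor <;>
  · simp only [BellU, Had, CNOT, ket, Matrix.mulVec, Matrix.mul_apply, Matrix.kroneckerMap_apply,
      dotProduct, Fin.sum_univ_two, Fintype.sum_prod_type]
    norm_num [Matrix.one_apply, Prod.ext_iff, _root_.map_mul, map_neg, absInv,
      show (2:Fin 2) = 0 from rfl, show ((0:Fin 2) = 2) = True from by decide,
      show ((0:Fin 2) = 1 + 1) = True from by decide]
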